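/- Let F be a field and σ an automorphism of F such that for every element x in the subgroup of squares (F*)², the element x⁻¹·σ(x) lies in the fixed field of σ. Then σ is the identity automorphism or F is the field with 9 elements. -/

import Mathlib

/-- Let `F` be a field and `σ` an automorphism of `F` such that for every
element `x` in the subgroup of squares `(F*)²`, the element `x⁻¹ · σ(x)` lies in the fixed
field of `σ`.  Then `σ` is the identity automorphism or `F` is the field with 9 elements. -/
theorem stmt_0 {F : Type*} [Field F] (σ : F ≃+* F)
    (h : ∀ x : F, (∃ y : F, y ≠ 0 ∧ x = y ^ 2) → σ (x⁻¹ * σ x) = x⁻¹ * σ x) :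
    σ = RingEquiv.refl F ∨ Nat.card F = 9 := by
  have hσ0 : ∀ z : F, σ z = 0 → z = 0 := by
    intro z hz
    have := σ.injective (a₁ := z) (a₂ := 0) (by simpa using hz)
    simpa using this
  have hσne : ∀ z : F, z ≠ 0 → σ z ≠ 0 := fun z hz hc => hz (hσ0 z hc)
  -- Key reformulation: σ(σ(y))²·y² = σ(y)⁴ for every y.
  have Q : ∀ y : F, σ (σ y) ^ 2 * y ^ 2 = σ y ^ 4 := by
    intro y
    by_cases hy : y = 0
    · simp [hy]
    · have hx : (y ^ 2) ≠ 0 := pow_ne_zero _ hy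
      have hx' : σ y ≠ 0 := hσne _ hy
      have H := h (y ^ 2) ⟨y, hy, rfl⟩
      rw [map_mul, map_inv₀] at H
      field_simp [hx'] at H
      simp only [map_pow] at H
      linear_combination H
  by_cases hA : ∀ y : F, σ (σ y) * y = σ y ^ 2
  · -- Case A: σ is the identity.
    left
    ext y
    show σ y = y
    by_cases hy : y = 0
    · simp [hy]
    by_cases hy1 : y = -1
    · simp [hy1]
    have hy1' : y + 1 ≠ 0 := fun hc => hy1 (eq_neg_of_add_eq_zero_left hc)
    have e1 : σ (σ y) * y = σ y ^ 2 := hA y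
    have e2 : (σ (σ y) + 1) * (y + 1) = (σ y + 1) ^ 2 := by
      have := hA (y + 1)
      rw [map_add, map_one, map_add, map_one] at this
      linear_combination this
    have h2 : σ (σ y) = 2 * σ y - y := by linear_combination e2 - e1
    have h3 : (σ y - y) ^ 2 = 0 := by linear_combination y * h2 - e1
    have h4 := pow_eq_zero_iff (n := 2) (by norm_num) |>.mp h3
    exact sub_eq_zero.mp h4
  · right
    push_neg at hA
    obtain ⟨y₀, hy₀ne⟩ := hA
    have hy₀ : y₀ ≠ 0 := by rintro rfl; simp at hy₀ne
    have hs₀ : σ y₀ ≠ 0 := hσne _ hy₀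
    have hneg : σ (σ y₀) * y₀ = -(σ y₀ ^ 2) := by
      have hQ0 : (σ (σ y₀) * y₀ - σ y₀ ^ 2) * (σ (σ y₀) * y₀ + σ y₀ ^ 2) = 0 := by
        linear_combination Q y₀
      rcases mul_eq_zero.mp hQ0 with hc | hc
      · exact absurd (sub_eq_zero.mp hc) hy₀ne
      · linear_combination hc
    have h2 : (2 : F) ≠ 0 := by
      intro h20
      apply hy₀ne
      rw [hneg]
      linear_combination -(σ y₀ ^ 2) * h20
    -- the element t with σ t = -t
    have hT : ∃ t : F, t ≠ 0 ∧ σ t = -t := by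
      refine ⟨σ y₀ * y₀⁻¹, mul_ne_zero hs₀ (inv_ne_zero hy₀), ?_⟩
      rw [map_mul, map_inv₀]
      field_simp
      linear_combination hneg
    obtain ⟨t, ht0, ht⟩ := hT
    -- Step 1: relation for fixed elements
    have key : ∀ a b : F, σ a = a → a ≠ 0 → σ b = b → b ≠ 0 → a ^ 2 + b ^ 2 * t ^ 2 = 0 := by
      intro a b ha ha0 hb hb0
      have hσy : σ (a + b * t) = a - b * t := by
        rw [map_add, map_mul, ha, hb, ht]; ring
      have hσy2 : σ (a - b * t) = a + b * t := by
        rw [map_sub, map_mul, ha, hb, ht]; ring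
      have hq := Q (a + b * t)
      rw [hσy, hσy2] at hq
      have hfac : (2:F) * 2 * 2 * a * b * t * (a ^ 2 + b ^ 2 * t ^ 2) = 0 := by
        linear_combination hq
      have hpne : (2:F) * 2 * 2 * a * b * t ≠ 0 :=
        mul_ne_zero (mul_ne_zero (mul_ne_zero (mul_ne_zero (mul_ne_zero h2 h2) h2) ha0) hb0) ht0
      exact (mul_eq_zero.mp hfac).resolve_left hpne
    have ht2 : t ^ 2 = -1 := by
      have := key 1 1 (map_one σ) one_ne_zero (map_one σ) one_ne_zero
      linear_combination this
    have hsq1 : ∀ a : F, σ a = a → a ≠ 0 → a ^ 2 = 1 := by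
      intro a ha ha0
      have := key a 1 ha ha0 (map_one σ) one_ne_zero
      linear_combination this - ht2
    have hσ2 : σ (2 : F) = 2 := by
      rw [show (2:F) = 1 + 1 by norm_num, map_add, map_one]
    have h3 : (3 : F) = 0 := by
      have := hsq1 2 hσ2 h2
      linear_combination this
    have ht1 : t ≠ 1 := by
      intro hc
      rw [hc, map_one] at ht
      exact h2 (by linear_combination ht)
    have htm1 : t ≠ -1 := by
      intro hc
      rw [hc] at ht
      simp only [map_neg, map_one] at ht
      exact h2 (by linear_combination -ht)
    have ht1' : t - 1 ≠ 0 := sub_ne_zero.mpr ht1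
    have htm1' : t + 1 ≠ 0 := fun hc => htm1 (eq_neg_of_add_eq_zero_left hc)
    -- Step 3/4: every nonzero w has σ w = ±w or ±t·w
    have hcases : ∀ w : F, w ≠ 0 → σ w = w ∨ σ w = -w ∨ σ w = t * w ∨ σ w = -(t * w) := by
      intro w hw
      have hsw : σ w ≠ 0 := hσne _ hw
      have hw2 : (w ^ 2 : F) ≠ 0 := pow_ne_zero _ hw
      have hsw2 : (σ w ^ 2 : F) ≠ 0 := pow_ne_zero _ hsw
      have hvne : σ w ^ 2 * (w ^ 2)⁻¹ ≠ 0 := mul_ne_zero hsw2 (inv_ne_zero hw2)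
      have hv2fix : σ (σ w ^ 2 * (w ^ 2)⁻¹) = σ w ^ 2 * (w ^ 2)⁻¹ := by
        rw [map_mul, map_inv₀, map_pow, map_pow]
        field_simp
        linear_combination Q w
      have hv4 := hsq1 _ hv2fix hvne
      have hq4 : σ w ^ 4 = w ^ 4 := by
        field_simp [hw] at hv4
        linear_combination hv4
      have hfac : (σ w - w) * ((σ w + w) * ((σ w - t * w) * (σ w + t * w))) = 0 := by
        linear_combination hq4 + (w ^ 4 - σ w ^ 2 * w ^ 2) * ht2
      rcases mul_eq_zero.mp hfac with hcc | hcc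
      · exact Or.inl (sub_eq_zero.mp hcc)
      rcases mul_eq_zero.mp hcc with hcc | hcc
      · exact Or.inr (Or.inl (eq_neg_of_add_eq_zero_left hcc))
      rcases mul_eq_zero.mp hcc with hcc | hcc
      · exact Or.inr (Or.inr (Or.inl (sub_eq_zero.mp hcc)))
      · exact Or.inr (Or.inr (Or.inr (eq_neg_of_add_eq_zero_left hcc)))
    -- Step 5: every element is one of nine explicit elements
    have mem : ∀ w : F, w = 0 ∨ w = 1 ∨ w = -1 ∨ w = t ∨ w = -t ∨ w = 1 + t ∨
        w = 1 - t ∨ w = -1 + t ∨ w = -1 - t := by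
      intro w
      by_cases hw : w = 0
      · exact Or.inl hw
      have h2t : (2:F) * t ≠ 0 := mul_ne_zero h2 ht0
      rcases hcases w hw with hc | hc | hc | hc
      · -- σ w = w
        have hw1 := hsq1 w hc hw
        have hfac : (w - 1) * (w + 1) = 0 := by linear_combination hw1
        rcases mul_eq_zero.mp hfac with hd | hd
        · exact Or.inr (Or.inl (sub_eq_zero.mp hd))
        · exact Or.inr (Or.inr (Or.inl (eq_neg_of_add_eq_zero_left hd)))
      · -- σ w = -w
        have hwt : σ (w * t) = w * t := by rw [map_mul, hc, ht]; ring
        have hwt1 := hsq1 (w * t) hwt (mul_ne_zero hw ht0)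
        have hw2 : w ^ 2 = -1 := by linear_combination -hwt1 + w ^ 2 * ht2
        have hfac : (w - t) * (w + t) = 0 := by linear_combination hw2 - ht2
        rcases mul_eq_zero.mp hfac with hd | hd
        · exact Or.inr (Or.inr (Or.inr (Or.inl (sub_eq_zero.mp hd))))
        · exact Or.inr (Or.inr (Or.inr (Or.inr (Or.inl (eq_neg_of_add_eq_zero_left hd)))))
      · -- σ w = t * w
        have hwm1 : w + 1 ≠ 0 := by
          intro hd
          have hwp : w = -1 := eq_neg_of_add_eq_zero_left hd
          rw [hwp] at hc
          simp only [map_neg, map_one] at hc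
          exact ht1 (by linear_combination hc)
        have hσw1 : σ (w + 1) = t * w + 1 := by rw [map_add, map_one, hc]
        rcases hcases (w + 1) hwm1 with hd | hd | hd | hd <;> rw [hσw1] at hd
        · exfalso
          have : (t - 1) * w = 0 := by linear_combination hd
          rcases mul_eq_zero.mp this with he | he
          exacts [ht1' he, hw he]
        · right; right; right; right; right; right; right; left
          have hfac : (t + 1) * (w - (-1 + t)) = 0 := by
            linear_combination hd - ht2
          have := (mul_eq_zero.mp hfac).resolve_left htm1'
          exact sub_eq_zero.mp this
        · exact absurd (by linear_combination -hd) ht1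
        · right; right; right; right; right; right; left
          have hfac : ((2:F) * t) * (w - (1 - t)) = 0 := by
            linear_combination hd + 2 * ht2 - (t + 1) * h3
          have := (mul_eq_zero.mp hfac).resolve_left h2t
          exact sub_eq_zero.mp this
      · -- σ w = -(t * w)
        have hwm1 : w + 1 ≠ 0 := by
          intro hd
          have hwp : w = -1 := eq_neg_of_add_eq_zero_left hd
          rw [hwp] at hc
          simp only [map_neg, map_one] at hc
          exact htm1 (by linear_combination -hc)
        have hσw1 : σ (w + 1) = -(t * w) + 1 := by rw [map_add, map_one, hc]
        rcases hcases (w + 1) hwm1 with hd | hd | hd | hd <;> rw [hσw1] at hd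
        · exfalso
          have : (t + 1) * w = 0 := by linear_combination -hd
          rcases mul_eq_zero.mp this with he | he
          exacts [htm1' he, hw he]
        · right; right; right; right; right; right; right; right
          have hfac : ((1:F) - t) * (w - (-1 - t)) = 0 := by
            linear_combination hd - ht2
          have h1t : (1:F) - t ≠ 0 := fun he => ht1 (by linear_combination -he)
          have := (mul_eq_zero.mp hfac).resolve_left h1t
          exact sub_eq_zero.mp this
        · right; right; right; right; right; left
          have hfac : ((2:F) * t) * (w - (1 + t)) = 0 := by
            linear_combination -hd - 2 * ht2 + (1 - t) * h3
          have := (mul_eq_zero.mp hfac).resolve_left h2t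
          exact sub_eq_zero.mp this
        · exact absurd (show (-1 : F) = t by linear_combination -hd) (Ne.symm htm1)
    -- Step 6: count
    have hchar : CharP F 3 := by
      have hC := ringChar.charP F
      have hdvd : ringChar F ∣ 3 := (ringChar.spec F 3).mp (by exact_mod_cast h3)
      rcases (Nat.prime_three).eq_one_or_self_of_dvd _ hdvd with h1 | h1
      · exact absurd h1 CharP.ringChar_ne_one
      · rw [h1] at hC; exact hC
    let ι : ZMod 3 →+* F := ZMod.castHom dvd_rfl F
    have hιinj : Function.Injective ι := ι.injective
    have hισ : ∀ a : ZMod 3, σ (ι a) = ι a := by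
      have hcomp : (σ : F →+* F).comp ι = ι := RingHom.ext_zmod _ _
      intro a
      exact RingHom.congr_fun hcomp a
    have indep : ∀ c d : ZMod 3, ι c + ι d * t = 0 → c = 0 ∧ d = 0 := by
      intro c d hcd
      have h1 : ι c - ι d * t = 0 := by
        have := congrArg σ hcd
        rw [map_add, map_mul, hισ, hισ, ht, map_zero] at this
        linear_combination this
      have hc0 : ι c = 0 := by
        have hx : (2:F) * ι c = 0 := by linear_combination hcd + h1
        rcases mul_eq_zero.mp hx with he | he
        exacts [absurd he h2, he]
      have hd0 : ι d = 0 := by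
        have hx : ι d * t = 0 := by linear_combination hcd - hc0
        rcases mul_eq_zero.mp hx with he | he
        exacts [he, absurd he ht0]
      exact ⟨hιinj (by simpa using hc0), hιinj (by simpa using hd0)⟩
    let f : ZMod 3 × ZMod 3 → F := fun p => ι p.1 + ι p.2 * t
    have hfbij : Function.Bijective f := by
      constructor
      · intro p q hpq
        have hz : ι (p.1 - q.1) + ι (p.2 - q.2) * t = 0 := by
          simp only [map_sub]
          simp only [f] at hpq
          linear_combination hpq
        obtain ⟨hc, hd⟩ := indep _ _ hz
        exact Prod.ext (by rwa [sub_eq_zero] at hc) (by rwa [sub_eq_zero] at hd)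
      · intro w
        have hι0 : ι (0 : ZMod 3) = 0 := map_zero ι
        have hι1 : ι (1 : ZMod 3) = 1 := map_one ι
        have hι2 : ι (2 : ZMod 3) = (2:F) := by
          rw [show (2 : ZMod 3) = 1 + 1 by decide, map_add, hι1]; norm_num
        rcases mem w with hw | hw | hw | hw | hw | hw | hw | hw | hw
        · exact ⟨(0, 0), by simp [f, hι0, hw]⟩
        · exact ⟨(1, 0), by simp [f, hι0, hι1, hw]⟩
        · refine ⟨(2, 0), ?_⟩
          show ι 2 + ι 0 * t = w
          rw [hι0, hι2, hw]; linear_combination h3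
        · exact ⟨(0, 1), by simp [f, hι0, hι1, hw]⟩
        · refine ⟨(0, 2), ?_⟩
          show ι 0 + ι 2 * t = w
          rw [hι0, hι2, hw]; linear_combination t * h3
        · refine ⟨(1, 1), ?_⟩
          show ι 1 + ι 1 * t = w
          rw [hι1, hw]; ring
        · refine ⟨(1, 2), ?_⟩
          show ι 1 + ι 2 * t = w
          rw [hι1, hι2, hw]; linear_combination t * h3
        · refine ⟨(2, 1), ?_⟩
          show ι 2 + ι 1 * t = w
          rw [hι1, hι2, hw]; linear_combination h3
        · refine ⟨(2, 2), ?_⟩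
          show ι 2 + ι 2 * t = w
          rw [hι2, hw]; linear_combination (1 + t) * h3
    have hcard := Nat.card_eq_of_bijective f hfbij
    rw [← hcard]
    simp [Nat.card_eq_fintype_card]
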